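/- Fix a natural number r ≥ 2. Define E'(r,n) = 1 + Σ_{i=0}^{r} C(n,i)·(2·F_i − [i=0])·2·(r−i), where C(n,i) is the binomial coefficient, F_i is the i-th ordered Bell number, and [i=0] is 1 if i = 0 and 0 otherwise. Then there exists a polynomial P with rational coefficients such that P(n) = E'(r,n) for every natural number n, P has degree r − 1, and the leading coefficient of P is 4·F_{r−1}/(r−1)!; in particular it has the same degree and leading coefficient as the polynomial n ↦ 1 + Σ_{i=0}^{r} C(n,i)·(2·F_i − [i=0])·(3^{r−i} − 1). -/

import Mathlib

/-- The `i`-th ordered Bell (Fubini) number: the total number of surjective functions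
from `Fin i` onto `Fin k`, summed over `0 ≤ k ≤ i`. -/
noncomputable def orderedBell (i : ℕ) : ℕ :=
  ∑ k ∈ Finset.range (i + 1), Nat.card {f : Fin i → Fin k // Function.Surjective f}

/-- `E'(r,n)`, the total face count of the modified Engström representation of the rank `r`
uniform matroid on `n` elements, where each join factor `D_{S⁰}(p)` is replaced by the
standard cell structure on `S^{r−i−1}` with two cells in each dimension. -/
noncomputable def engstromFaces' (r n : ℕ) : ℕ :=
  1 + ∑ i ∈ Finset.range (r + 1),
    Nat.choose n i * (2 * orderedBell i - (if i = 0 then 1 else 0)) * (2 * (r - i))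

/-- `E(r,n)`, the total number of faces of the (original) Engström representation of the
rank `r` uniform matroid on `n` elements with indexing complex `S⁰`. -/
noncomputable def engstromFaces (r n : ℕ) : ℕ :=
  1 + ∑ i ∈ Finset.range (r + 1),
    Nat.choose n i * (2 * orderedBell i - (if i = 0 then 1 else 0)) * (3 ^ (r - i) - 1)

lemma orderedBell_pos (i : ℕ) : 0 < orderedBell i := by
  haveI : Nonempty {f : Fin i → Fin i // Function.Surjective f} :=
    ⟨⟨id, Function.surjective_id⟩⟩
  have h : 0 < Nat.card {f : Fin i → Fin i // Function.Surjective f} := Nat.card_pos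
  exact lt_of_lt_of_le h <| Finset.single_le_sum
    (f := fun k => Nat.card {f : Fin i → Fin k // Function.Surjective f})
    (fun k _ => Nat.zero_le _) (Finset.self_mem_range_succ i)

open Polynomial Finset in
lemma exists_poly (r : ℕ) (hr : 2 ≤ r) (c : ℕ → ℕ) (hcr : c r = 0) (hc : c (r - 1) ≠ 0) :
    ∃ P : Polynomial ℚ,
      (∀ n : ℕ, P.eval (n : ℚ) = 1 + ∑ i ∈ Finset.range (r + 1), (c i : ℚ) * n.choose i) ∧
      P.natDegree = r - 1 ∧ P.leadingCoeff = (c (r - 1) : ℚ) / (Nat.factorial (r - 1)) := by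
  obtain ⟨m, rfl⟩ : ∃ m, r = m + 1 := ⟨r - 1, by omega⟩
  have hm : 1 ≤ m := by omega
  simp only [Nat.add_sub_cancel] at hc ⊢
  set a : ℚ := (c m : ℚ) / (Nat.factorial m) with ha
  have hane : a ≠ 0 := by
    apply div_ne_zero
    · exact_mod_cast hc
    · exact_mod_cast (Nat.factorial_pos m).ne'
  set p : Polynomial ℚ := Polynomial.C 1 +
    ∑ i ∈ range m, Polynomial.C ((c i : ℚ) / (Nat.factorial i)) * descPochhammer ℚ i with hp
  set q : Polynomial ℚ := Polynomial.C a * descPochhammer ℚ m with hq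
  have hdpne : ∀ k : ℕ, descPochhammer ℚ k ≠ 0 := fun k => (monic_descPochhammer ℚ k).ne_zero
  have hdpdeg : ∀ k : ℕ, (descPochhammer ℚ k).degree = (k : WithBot ℕ) := by
    intro k
    rw [degree_eq_natDegree (hdpne k), descPochhammer_natDegree]
  have hqdeg : q.degree = (m : WithBot ℕ) := by
    rw [hq, degree_C_mul hane, hdpdeg]
  have hpdeg : p.degree < q.degree := by
    rw [hqdeg, hp]
    apply lt_of_le_of_lt (degree_add_le _ _)
    apply max_lt
    · exact lt_of_le_of_lt degree_C_le (by exact_mod_cast Nat.pos_of_ne_zero (by omega))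
    · apply lt_of_le_of_lt (degree_sum_le _ _)
      rw [Finset.sup_lt_iff (by exact_mod_cast WithBot.bot_lt_coe m)]
      intro i hi
      refine lt_of_le_of_lt (degree_mul_le _ _) ?_
      rw [hdpdeg]
      refine lt_of_le_of_lt (add_le_add_left degree_C_le _) ?_
      rw [zero_add]
      exact_mod_cast mem_range.mp hi
  have heval : ∀ k : ℕ, ∀ n : ℕ,
      ((c k : ℚ) / (Nat.factorial k)) * (descPochhammer ℚ k).eval (n : ℚ)
        = (c k : ℚ) * n.choose k := by
    intro k n
    rw [descPochhammer_eval_eq_descFactorial]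
    rw [Nat.descFactorial_eq_factorial_mul_choose]
    push_cast
    field_simp
  refine ⟨p + q, ?_, ?_, ?_⟩
  · intro n
    rw [Finset.sum_range_succ, hcr]
    simp only [Nat.cast_zero, zero_mul, add_zero]
    rw [Finset.sum_range_succ]
    rw [hp, hq]
    simp only [eval_add, eval_mul, eval_C, eval_finset_sum]
    rw [Finset.sum_congr rfl (fun i _ => heval i n)]
    rw [heval m n]
    ring
  · rw [natDegree_eq_of_degree_eq (degree_add_eq_right_of_degree_lt hpdeg)]
    rw [hq, natDegree_C_mul hane, descPochhammer_natDegree]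
  · rw [leadingCoeff_add_of_degree_lt hpdeg, hq, leadingCoeff_mul, leadingCoeff_C,
      (monic_descPochhammer ℚ m).leadingCoeff, mul_one]

/-- For fixed `r ≥ 2`, `E'(r,n)` is a polynomial in `n` of degree `r − 1` with leading
coefficient `4·F_{r−1}/(r−1)!`; in particular it has the same degree and leading coefficient
as the polynomial giving `E(r,n)`. -/
theorem engstromFaces'_polynomial (r : ℕ) (hr : 2 ≤ r) :
    ∃ P : Polynomial ℚ,
      (∀ n : ℕ, P.eval (n : ℚ) = engstromFaces' r n) ∧
      P.natDegree = r - 1 ∧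
      P.leadingCoeff = 4 * (orderedBell (r - 1) : ℚ) / (Nat.factorial (r - 1)) ∧
      ∃ Q : Polynomial ℚ,
        (∀ n : ℕ, Q.eval (n : ℚ) = engstromFaces r n) ∧
        Q.natDegree = P.natDegree ∧ Q.leadingCoeff = P.leadingCoeff := by
  set c : ℕ → ℕ := fun i => (2 * orderedBell i - (if i = 0 then 1 else 0)) * (2 * (r - i)) with hcdef
  set c' : ℕ → ℕ := fun i => (2 * orderedBell i - (if i = 0 then 1 else 0)) * (3 ^ (r - i) - 1)
    with hc'def
  have hrr : r - (r - 1) = 1 := by omega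
  have hite : (if r - 1 = 0 then 1 else 0) = 0 := by simp [show r - 1 ≠ 0 by omega]
  have hcm : c (r - 1) = 4 * orderedBell (r - 1) := by
    simp only [hcdef, hite, hrr]
    ring_nf
    omega
  have hc'm : c' (r - 1) = 4 * orderedBell (r - 1) := by
    simp only [hc'def, hite, hrr]
    ring_nf
    omega
  have hFpos := orderedBell_pos (r - 1)
  obtain ⟨P, hPe, hPd, hPl⟩ := exists_poly r hr c (by simp [hcdef]) (by omega)
  obtain ⟨Q, hQe, hQd, hQl⟩ := exists_poly r hr c' (by simp [hc'def]) (by omega)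
  have hlead : (c (r-1) : ℚ) / (Nat.factorial (r-1))
      = 4 * (orderedBell (r - 1) : ℚ) / (Nat.factorial (r - 1)) := by
    rw [hcm]; push_cast; ring
  refine ⟨P, ?_, hPd, hPl.trans hlead, Q, ?_, hQd.trans hPd.symm, ?_⟩
  · intro n
    rw [hPe n, engstromFaces']
    push_cast
    refine congrArg (1 + ·) (Finset.sum_congr rfl fun i _ => ?_)
    rw [hcdef]
    push_cast
    ring
  · intro n
    rw [hQe n, engstromFaces]
    push_cast
    refine congrArg (1 + ·) (Finset.sum_congr rfl fun i _ => ?_)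
    rw [hc'def]
    push_cast
    ring
  · rw [hQl, hPl, hc'm, hcm]
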